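/- Let x, y, z be roots of unity and let p, q, r ≥ 1 be integers with (q,y) ≠ (1,1) and (r,z) ≠ (1,1). Then Ti_{p,q,r}(x,y,z) = y·z·2^{3−p−q−r}·( ti_r(z)·S̃_{p;q}(x;y) − S̃_{p,r;q}(x,z;y) ), i.e., 8·∑_{0<n_1<n_2<n_3} x^{n_1}·y^{n_2}·z^{n_3}/((2n_1−1)^p·(2n_2−2)^q·(2n_3−3)^r) = y·z·2^{3−p−q−r}·( ti_r(z)·∑_{n=1}^∞ t_n(p;x)·y^n/n^q − ∑_{n=1}^∞ t_n(p;x)·t_n(r;z)·y^n/n^q ). -/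

import Mathlib

open Filter Finset

/-- Limit of a sequence of complex numbers (junk value if divergent). -/
noncomputable def seqLim (f : ℕ → ℂ) : ℂ := lim (Filter.map f Filter.atTop)

/-- Finite sum `t_n(p;z) = ∑_{k=1}^n z^k/(k-1/2)^p`. -/
noncomputable def tFin (p : ℕ) (z : ℂ) (n : ℕ) : ℂ :=
  ∑ k ∈ Finset.Icc 1 n, z ^ k / ((k : ℂ) - 1/2) ^ p

/-- t-polylogarithm `ti_p(z) = ∑_{n=1}^∞ z^n/(n-1/2)^p`, as limit of partial sums. -/
noncomputable def tpoly (p : ℕ) (z : ℂ) : ℂ :=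
  seqLim (fun N => ∑ n ∈ Finset.Icc 1 N, z ^ n / ((n : ℂ) - 1/2) ^ p)


/-- Cyclotomic double T-value
`Ti_{p,q}(x,y) = 4 ∑_{0<n1<n2} x^{n1} y^{n2}/((2n1-1)^p (2n2-2)^q)`, as limit of partial sums. -/
noncomputable def Ti2 (p q : ℕ) (x y : ℂ) : ℂ :=
  4 * seqLim (fun N => ∑ n2 ∈ Finset.Icc 1 N, ∑ n1 ∈ Finset.Icc 1 (n2 - 1),
    x ^ n1 * y ^ n2 / ((2 * (n1 : ℂ) - 1) ^ p * (2 * (n2 : ℂ) - 2) ^ q))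

/-- `S̃_{p;q}(x;y) = ∑_{n=1}^∞ t_n(p;x) y^n/n^q`, as limit of partial sums. -/
noncomputable def Stilde (p q : ℕ) (x y : ℂ) : ℂ :=
  seqLim (fun N => ∑ n ∈ Finset.Icc 1 N, tFin p x n * y ^ n / (n : ℂ) ^ q)

/-- Cyclotomic triple T-value
`Ti_{p,q,r}(x,y,z) = 8 ∑_{0<n1<n2<n3} x^{n1} y^{n2} z^{n3}/((2n1-1)^p (2n2-2)^q (2n3-3)^r)`. -/
noncomputable def Ti3 (p q r : ℕ) (x y z : ℂ) : ℂ :=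
  8 * seqLim (fun N => ∑ n3 ∈ Finset.Icc 1 N, ∑ n2 ∈ Finset.Icc 1 (n3 - 1),
    ∑ n1 ∈ Finset.Icc 1 (n2 - 1),
      x ^ n1 * y ^ n2 * z ^ n3 /
        ((2 * (n1 : ℂ) - 1) ^ p * (2 * (n2 : ℂ) - 2) ^ q * (2 * (n3 : ℂ) - 3) ^ r))

/-- `S̃_{p1,p2;q}(z1,z2;y) = ∑_{n=1}^∞ t_n(p1;z1) t_n(p2;z2) y^n/n^q`. -/
noncomputable def Stilde2 (p1 p2 q : ℕ) (z1 z2 y : ℂ) : ℂ :=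
  seqLim (fun N => ∑ n ∈ Finset.Icc 1 N, tFin p1 z1 n * tFin p2 z2 n * y ^ n / (n : ℂ) ^ q)

namespace Stmt17Aux

open Topology

lemma Icc_one_eq_Ioc (n : ℕ) : Finset.Icc 1 n = Finset.Ioc 0 n := by
  ext k; simp [Nat.lt_iff_add_one_le]

lemma sum_Ioc_top (f : ℕ → ℂ) {N M : ℕ} (h : N ≤ M) :
    ∑ n ∈ Ioc N (M+1), f n = ∑ n ∈ Ioc N M, f n + f (M+1) := by
  rw [← Finset.Icc_add_one_left_eq_Ioc, Finset.sum_Icc_succ_top (by omega), Finset.Icc_add_one_left_eq_Ioc]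

lemma telescope (f : ℕ → ℝ) {N M : ℕ} (h : N ≤ M) :
    ∑ n ∈ Ioc N M, (f n - f (n+1)) = f (N+1) - f (M+1) := by
  induction M, h using Nat.le_induction with
  | base => simp
  | succ M hNM ih =>
      rw [← Finset.Icc_add_one_left_eq_Ioc, Finset.sum_Icc_succ_top (by omega), Finset.Icc_add_one_left_eq_Ioc, ih]; ring

lemma telescopeR (f : ℕ → ℝ) {N M : ℕ} (h : N ≤ M) :
    ∑ n ∈ Ioc N M, (f (n+1) - f n) = f (M+1) - f (N+1) := by
  have := telescope (fun n => -f n) h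
  simp only [neg_sub_neg] at this
  linarith [this]

lemma sum_Icc_diff (c : ℕ → ℂ) {N M : ℕ} (h : N ≤ M) :
    (∑ n ∈ Icc 1 M, c n) - ∑ n ∈ Icc 1 N, c n = ∑ n ∈ Ioc N M, c n := by
  rw [Icc_one_eq_Ioc, Icc_one_eq_Ioc, ← Finset.sum_Ioc_consecutive c (Nat.zero_le N) h]
  ring

lemma abel_identity (a g : ℕ → ℂ) {N M : ℕ} (h : N ≤ M) :
    ∑ n ∈ Ioc N M, a n * g n
      = a (M+1) * (∑ k ∈ Icc 1 M, g k) - a (N+1) * (∑ k ∈ Icc 1 N, g k)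
        + ∑ n ∈ Ioc N M, (a n - a (n+1)) * (∑ k ∈ Icc 1 n, g k) := by
  induction M, h using Nat.le_induction with
  | base => simp
  | succ M hNM ih =>
      have hG : (∑ k ∈ Icc 1 (M+1), g k) = (∑ k ∈ Icc 1 M, g k) + g (M+1) :=
        Finset.sum_Icc_succ_top (by omega) g
      rw [sum_Ioc_top _ hNM, sum_Ioc_top _ hNM, ih, hG]; ring

lemma abel_bound (a : ℕ → ℝ) (g : ℕ → ℂ) (B : ℝ) (haA : Antitone a) (ha0 : ∀ n, 0 ≤ a n)
    (hB : ∀ n, ‖∑ k ∈ Icc 1 n, g k‖ ≤ B) {N M : ℕ} (h : N ≤ M) :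
    ‖∑ n ∈ Ioc N M, (a n : ℂ) * g n‖ ≤ 2 * B * a (N+1) := by
  have key := abel_identity (fun n => ((a n : ℝ) : ℂ)) g h
  rw [key]
  have h3 : ‖∑ n ∈ Ioc N M, (((a n : ℝ) : ℂ) - ((a (n+1) : ℝ) : ℂ)) * (∑ k ∈ Icc 1 n, g k)‖
      ≤ (a (N+1) - a (M+1)) * B := by
    calc ‖∑ n ∈ Ioc N M, (((a n : ℝ) : ℂ) - ((a (n+1) : ℝ) : ℂ)) * (∑ k ∈ Icc 1 n, g k)‖
        ≤ ∑ n ∈ Ioc N M, ‖(((a n : ℝ) : ℂ) - ((a (n+1) : ℝ) : ℂ)) * (∑ k ∈ Icc 1 n, g k)‖ :=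
          norm_sum_le _ _
      _ ≤ ∑ n ∈ Ioc N M, (a n - a (n+1)) * B := by
          refine Finset.sum_le_sum fun n _ => ?_
          rw [norm_mul]
          have h1 : ‖(((a n : ℝ) : ℂ) - ((a (n+1) : ℝ) : ℂ))‖ = a n - a (n+1) := by
            rw [← Complex.ofReal_sub, Complex.norm_real,
              Real.norm_of_nonneg (by linarith [haA (Nat.le_succ n)])]
          rw [h1]
          exact mul_le_mul_of_nonneg_left (hB n) (by linarith [haA (Nat.le_succ n)])
      _ = (a (N+1) - a (M+1)) * B := by rw [← Finset.sum_mul, telescope a h]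
  have h1 : ‖((a (M+1) : ℝ) : ℂ) * (∑ k ∈ Icc 1 M, g k)‖ ≤ a (M+1) * B := by
    rw [norm_mul, Complex.norm_real, Real.norm_of_nonneg (ha0 _)]
    exact mul_le_mul_of_nonneg_left (hB M) (ha0 _)
  have h2 : ‖((a (N+1) : ℝ) : ℂ) * (∑ k ∈ Icc 1 N, g k)‖ ≤ a (N+1) * B := by
    rw [norm_mul, Complex.norm_real, Real.norm_of_nonneg (ha0 _)]
    exact mul_le_mul_of_nonneg_left (hB N) (ha0 _)
  calc ‖_ - _ + _‖ ≤ ‖((a (M+1) : ℝ) : ℂ) * (∑ k ∈ Icc 1 M, g k)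
          - ((a (N+1) : ℝ) : ℂ) * (∑ k ∈ Icc 1 N, g k)‖
        + ‖∑ n ∈ Ioc N M, (((a n : ℝ) : ℂ) - ((a (n+1) : ℝ) : ℂ)) * (∑ k ∈ Icc 1 n, g k)‖ :=
        norm_add_le _ _
    _ ≤ (‖((a (M+1) : ℝ) : ℂ) * (∑ k ∈ Icc 1 M, g k)‖
          + ‖((a (N+1) : ℝ) : ℂ) * (∑ k ∈ Icc 1 N, g k)‖)
        + (a (N+1) - a (M+1)) * B := add_le_add (norm_sub_le _ _) h3
    _ ≤ (a (M+1) * B + a (N+1) * B) + (a (N+1) - a (M+1)) * B := by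
        exact add_le_add (add_le_add h1 h2) le_rfl
    _ = 2 * B * a (N+1) := by ring

lemma abs_bound (c : ℕ → ℂ) (φ : ℕ → ℝ) (K : ℝ) (hK : 0 ≤ K) (hφ : ∀ n, 0 ≤ φ n)
    (hc : ∀ n, 1 ≤ n → ‖c n‖ ≤ K * (φ n - φ (n+1))) {N M : ℕ} (h : N ≤ M) :
    ‖∑ n ∈ Ioc N M, c n‖ ≤ K * φ (N+1) := by
  calc ‖∑ n ∈ Ioc N M, c n‖ ≤ ∑ n ∈ Ioc N M, ‖c n‖ := norm_sum_le _ _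
    _ ≤ ∑ n ∈ Ioc N M, K * (φ n - φ (n+1)) := by
        refine Finset.sum_le_sum fun n hn => hc n ?_
        rw [Finset.mem_Ioc] at hn; omega
    _ = K * (φ (N+1) - φ (M+1)) := by rw [← Finset.mul_sum, telescope φ h]
    _ ≤ K * φ (N+1) := by nlinarith [hφ (M+1)]

lemma exists_lim_of_rate (S : ℕ → ℂ) (ρ : ℕ → ℝ) (hρ : Tendsto ρ atTop (𝓝 0))
    (h : ∀ N M : ℕ, N ≤ M → ‖S M - S N‖ ≤ ρ N) :
    ∃ L, Tendsto S atTop (𝓝 L) ∧ ∀ N, ‖S N - L‖ ≤ ρ N := by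
  have hcs : CauchySeq S := by
    refine cauchySeq_of_le_tendsto_0 (fun N => 2 * ρ N) (fun n m N hn hm => ?_)
      (by simpa using hρ.const_mul (2:ℝ))
    calc dist (S n) (S m) ≤ dist (S n) (S N) + dist (S N) (S m) := dist_triangle _ _ _
      _ ≤ ρ N + ρ N := by
          rw [dist_eq_norm, dist_eq_norm]
          have h1 := h N n hn
          have h2 := h N m hm
          rw [show S n - S N = -(S N - S n) by ring, norm_neg] at h1
          rw [norm_sub_rev] at h2
          rw [norm_sub_rev] at h1
          exact add_le_add h1 h2
      _ = 2 * ρ N := by ring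
  obtain ⟨L, hL⟩ := cauchySeq_tendsto_of_complete hcs
  refine ⟨L, hL, fun N => ?_⟩
  have h1 : Tendsto (fun M => ‖S M - S N‖) atTop (𝓝 ‖L - S N‖) := (hL.sub_const (S N)).norm
  have h2 : ‖L - S N‖ ≤ ρ N :=
    le_of_tendsto h1 (eventually_atTop.2 ⟨N, fun M hM => h N M hM⟩)
  rwa [norm_sub_rev] at h2

lemma norm_eq_one {w : ℂ} (hw : ∃ m : ℕ, 0 < m ∧ w ^ m = 1) : ‖w‖ = 1 := by
  obtain ⟨m, hm, h1⟩ := hw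
  have h2 : ‖w‖ ^ m = 1 := by rw [← norm_pow, h1, norm_one]
  rcases (pow_eq_one_iff_cases.mp h2) with h | h | h
  · omega
  · exact h
  · exfalso; have := norm_nonneg w; rw [h.1] at this; linarith

lemma geom_bound {w : ℂ} (hw1 : ‖w‖ = 1) (hw : w ≠ 1) (n : ℕ) :
    ‖∑ k ∈ Icc 1 n, w ^ k‖ ≤ 2 / ‖w - 1‖ := by
  have hne : w - 1 ≠ 0 := sub_ne_zero.2 hw
  have hnn : 0 < ‖w - 1‖ := norm_pos_iff.2 hne
  have key : ∑ k ∈ Icc 1 n, w ^ k = w * ((w ^ n - 1) / (w - 1)) := by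
    rw [← Finset.Ico_add_one_right_eq_Icc, Finset.sum_Ico_eq_sum_range]
    norm_num
    simp_rw [pow_add, pow_one]
    rw [← Finset.mul_sum, geom_sum_eq hw]
  rw [key, norm_mul, hw1, one_mul, norm_div]
  rw [div_le_div_iff₀ hnn hnn]
  have h2 : ‖w ^ n - 1‖ ≤ 2 := by
    calc ‖w ^ n - 1‖ ≤ ‖w ^ n‖ + ‖(1:ℂ)‖ := norm_sub_le _ _
      _ = 2 := by rw [norm_pow, hw1, norm_one]; norm_num
  nlinarith

lemma inv_le_c_inv {x y c : ℝ} (hx : 0 < x) (hy : 0 < y) (h : y ≤ c * x) : x⁻¹ ≤ c * y⁻¹ := by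
  rw [show c * y⁻¹ = c / y by ring, le_div_iff₀ hy, inv_mul_eq_div, div_le_iff₀ hx]
  linarith

lemma cast_ge_one {n : ℕ} (hn : 1 ≤ n) : (1:ℝ) ≤ (n:ℝ) := by exact_mod_cast hn

lemma half_pos' {n : ℕ} (hn : 1 ≤ n) : (0:ℝ) < (n:ℝ) - 1/2 := by
  linarith [cast_ge_one hn]

lemma norm_half_pow {n : ℕ} (hn : 1 ≤ n) (p : ℕ) :
    ‖((n : ℂ) - 1/2) ^ p‖ = ((n : ℝ) - 1/2) ^ p := by
  have h : ((n : ℂ) - 1/2) = (((n : ℝ) - 1/2 : ℝ) : ℂ) := by push_cast; ring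
  rw [h, ← Complex.ofReal_pow, Complex.norm_real, Real.norm_of_nonneg]
  exact pow_nonneg (half_pos' hn).le p

lemma norm_nat_pow (n : ℕ) (q : ℕ) : ‖((n : ℂ)) ^ q‖ = ((n : ℝ)) ^ q := by
  rw [show ((n:ℂ)) = (((n:ℝ):ℂ)) by push_cast; ring, ← Complex.ofReal_pow, Complex.norm_real,
    Real.norm_of_nonneg (by positivity)]

lemma tFin_tail (w : ℂ) (hw1 : ‖w‖ = 1) (p : ℕ) (hp : 1 ≤ p) (hw : w ≠ 1 ∨ 2 ≤ p) :
    ∃ C, 0 ≤ C ∧ ∀ N M : ℕ, N ≤ M →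
      ‖tFin p w M - tFin p w N‖ ≤ C * (((N:ℝ)+1))⁻¹ := by
  rcases hw with hw | hp2
  · -- Dirichlet case
    set a : ℕ → ℝ := fun n => if n = 0 then (2:ℝ)^p else (((n:ℝ) - 1/2)⁻¹)^p with ha_def
    have haval : ∀ n : ℕ, 1 ≤ n → a n = (((n:ℝ) - 1/2)⁻¹)^p := by
      intro n hn; simp only [ha_def]; rw [if_neg (by omega)]
    have ha0 : ∀ n, 0 ≤ a n := by
      intro n; simp only [ha_def]; split
      · positivity
      · rcases Nat.eq_zero_or_pos n with h | h
        · simp_all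
        · have := half_pos' h; positivity
    have ha1 : a 1 = (2:ℝ)^p := by
      rw [haval 1 le_rfl]; norm_num
    have haA : Antitone a := by
      refine antitone_nat_of_succ_le fun n => ?_
      match n with
      | 0 => rw [ha1]; simp [ha_def]
      | (m+1) =>
        rw [haval (m+2) (by omega), haval (m+1) (by omega)]
        refine pow_le_pow_left₀ (by have := half_pos' (show 1 ≤ m+2 by omega); positivity) ?_ p
        rw [inv_le_inv₀ (half_pos' (show 1 ≤ m+2 by omega)) (half_pos' (show 1 ≤ m+1 by omega))]
        push_cast; linarith
    have h4 : (4:ℝ) ≤ 2^(p+1) := by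
      calc (4:ℝ) = 2^2 := by norm_num
      _ ≤ 2^(p+1) := pow_le_pow_right₀ (by norm_num) (by omega)
    have hub : ∀ N : ℕ, a (N+1) ≤ 2^(p+1) * (((N:ℝ)+1))⁻¹ := by
      intro N
      match N with
      | 0 =>
        rw [ha1]; norm_num
        rw [pow_succ]; nlinarith [pow_pos (zero_lt_two (α:=ℝ)) p]
      | (m+1) =>
        rw [haval (m+2) (by omega)]
        have hb0 : (0:ℝ) < ((m+2:ℕ):ℝ) - 1/2 := half_pos' (by omega)
        calc ((((m+2:ℕ):ℝ) - 1/2)⁻¹)^p ≤ ((((m+2:ℕ):ℝ) - 1/2)⁻¹)^1 := by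
              apply pow_le_pow_of_le_one (by positivity) ?_ hp
              rw [inv_le_one_iff₀]; right; push_cast; linarith [Nat.cast_nonneg (α:=ℝ) m]
          _ ≤ 2^(p+1) * (((m+1:ℕ):ℝ)+1)⁻¹ := by
              rw [pow_one]
              apply inv_le_c_inv hb0 (by push_cast; linarith [Nat.cast_nonneg (α:=ℝ) m])
              push_cast; nlinarith [Nat.cast_nonneg (α:=ℝ) m]
    set B : ℝ := 2 / ‖w - 1‖ with hB_def
    have hB0 : 0 ≤ B := by positivity
    refine ⟨2 * B * 2^(p+1), by positivity, fun N M h => ?_⟩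
    have key : tFin p w M - tFin p w N = ∑ n ∈ Ioc N M, ((a n : ℝ) : ℂ) * w ^ n := by
      rw [tFin, tFin, sum_Icc_diff _ h]
      refine Finset.sum_congr rfl fun n hn => ?_
      rw [Finset.mem_Ioc] at hn
      have hn1 : 1 ≤ n := by omega
      rw [haval n hn1]
      push_cast
      rw [inv_pow, div_eq_mul_inv, mul_comm]
    rw [key]
    calc ‖∑ n ∈ Ioc N M, ((a n : ℝ) : ℂ) * w ^ n‖ ≤ 2 * B * a (N+1) :=
          abel_bound a (fun n => w ^ n) B haA ha0 (fun n => geom_bound hw1 hw n) h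
      _ ≤ 2 * B * (2^(p+1) * (((N:ℝ)+1))⁻¹) := by
          apply mul_le_mul_of_nonneg_left (hub N) (by positivity)
      _ = 2 * B * 2^(p+1) * (((N:ℝ)+1))⁻¹ := by ring
  ·
    refine ⟨2^(p+1), by positivity, fun N M h => ?_⟩
    have key : tFin p w M - tFin p w N = ∑ n ∈ Ioc N M, w ^ n / ((n:ℂ) - 1/2)^p := by
      rw [tFin, tFin, sum_Icc_diff _ h]
    rw [key]
    have hb := abs_bound (fun n => w ^ n / ((n:ℂ) - 1/2)^p) (fun n => ((n:ℝ))⁻¹) (2^(p+1))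
      (by positivity) (fun n => by positivity) ?_ h
    · calc ‖∑ n ∈ Ioc N M, w ^ n / ((n:ℂ) - 1/2)^p‖ ≤ 2^(p+1) * ((((N+1:ℕ)):ℝ))⁻¹ := hb
        _ = 2^(p+1) * (((N:ℝ)+1))⁻¹ := by push_cast; ring
    · intro n hn
      have hx1 : (1:ℝ) ≤ (n:ℝ) := cast_ge_one hn
      set x : ℝ := (n:ℝ) with hx_def
      have h0 : (0:ℝ) < x - 1/2 := half_pos' hn
      have hnorm : ‖w ^ n / ((n:ℂ) - 1/2)^p‖ = ((x - 1/2)^p)⁻¹ := by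
        rw [norm_div, norm_pow, hw1, one_pow, norm_half_pow hn, one_div]
      rw [hnorm]
      have hd : (x⁻¹ - (((n+1:ℕ)):ℝ)⁻¹) = (x*(x+1))⁻¹ := by
        push_cast
        rw [mul_inv]
        field_simp
        rw [hx_def]; ring
      rw [hd]
      apply inv_le_c_inv (by positivity) (by nlinarith)
      have e1 : x^p ≤ 2^p * (x-1/2)^p := by
        calc x^p = (x/2)^p * 2^p := by
              rw [div_pow]; field_simp
          _ ≤ (x-1/2)^p * 2^p := by
              apply mul_le_mul_of_nonneg_right _ (by positivity)
              exact pow_le_pow_left₀ (by positivity) (by linarith) p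
          _ = 2^p * (x-1/2)^p := by ring
      have e2 : x^2 ≤ x^p := pow_le_pow_right₀ hx1 hp2
      have hps : (2:ℝ)^(p+1) = 2*2^p := by rw [pow_succ]; ring
      rw [hps]
      nlinarith [e1, e2, hx1]

lemma tendsto_Cinv (C : ℝ) : Tendsto (fun N : ℕ => C * (((N:ℝ)+1))⁻¹) atTop (𝓝 0) := by
  have := tendsto_one_div_add_atTop_nhds_zero_nat.const_mul C
  simpa [one_div] using this

lemma lim_of_tail (S : ℕ → ℂ) (C : ℝ)
    (h : ∀ N M : ℕ, N ≤ M → ‖S M - S N‖ ≤ C * (((N:ℝ)+1))⁻¹) :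
    ∃ L, Tendsto S atTop (𝓝 L) ∧ ∀ N, ‖S N - L‖ ≤ C * (((N:ℝ)+1))⁻¹ :=
  exists_lim_of_rate S _ (tendsto_Cinv C) h

lemma tendsto_inv_sqrt : Tendsto (fun n : ℕ => (Real.sqrt (n:ℝ))⁻¹) atTop (𝓝 0) := by
  have h := (Real.continuous_sqrt.tendsto 0).comp tendsto_inv_atTop_nhds_zero_nat
  rw [Real.sqrt_zero] at h
  refine h.congr fun n => ?_
  simp [Function.comp, Real.sqrt_inv]

/-- `√k - √(k-1) = (√k + √(k-1))⁻¹`-type step bound: `1/k ≤ 2 (√k - √(k-1))`. -/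
lemma sqrt_step {k : ℕ} (hk : 1 ≤ k) :
    ((k:ℝ))⁻¹ ≤ 2 * (Real.sqrt ((k:ℝ)+1-1) - Real.sqrt ((k:ℝ)-1)) := by
  set s := Real.sqrt ((k:ℝ)+1-1) with hs_def
  set t := Real.sqrt ((k:ℝ)-1) with ht_def
  have hk1 : (1:ℝ) ≤ (k:ℝ) := cast_ge_one hk
  have hs : s^2 = (k:ℝ) := by
    rw [hs_def, show (k:ℝ)+1-1 = (k:ℝ) by ring, Real.sq_sqrt (by linarith)]
  have ht : t^2 = (k:ℝ)-1 := Real.sq_sqrt (by linarith)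
  have hs0 : 0 ≤ s := Real.sqrt_nonneg _
  have ht0 : 0 ≤ t := Real.sqrt_nonneg _
  have hs1 : 1 ≤ s := by nlinarith
  have hts : t ≤ s := by
    rw [hs_def, ht_def]; exact Real.sqrt_le_sqrt (by linarith)
  have hst : s - t = (s + t)⁻¹ := by
    apply eq_inv_of_mul_eq_one_left
    nlinarith
  rw [hst]
  exact inv_le_c_inv (by linarith) (by linarith) (by nlinarith)

/-- `1/(k √k) ≤ 4 (1/√k - 1/√(k+1))`. -/
lemma inv_sqrt_step {k : ℕ} (hk : 1 ≤ k) :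
    ((k:ℝ) * Real.sqrt (k:ℝ))⁻¹
      ≤ 4 * ((Real.sqrt ((k:ℕ):ℝ))⁻¹ - (Real.sqrt (((k+1:ℕ)):ℝ))⁻¹) := by
  have hk1 : (1:ℝ) ≤ (k:ℝ) := cast_ge_one hk
  set s := Real.sqrt ((k:ℕ):ℝ) with hs_def
  set u := Real.sqrt (((k+1:ℕ)):ℝ) with hu_def
  have hs : s^2 = (k:ℝ) := Real.sq_sqrt (by linarith)
  have hu : u^2 = (k:ℝ)+1 := by
    rw [hu_def]; push_cast; exact Real.sq_sqrt (by linarith)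
  have hs0 : 0 ≤ s := Real.sqrt_nonneg _
  have hu0 : 0 ≤ u := Real.sqrt_nonneg _
  have hs1 : 1 ≤ s := by nlinarith
  have hsu : s ≤ u := by
    rw [hs_def, hu_def]; exact Real.sqrt_le_sqrt (by push_cast; linarith)
  have hus : u - s = (u + s)⁻¹ := by
    apply eq_inv_of_mul_eq_one_left
    nlinarith
  have hdiff : s⁻¹ - u⁻¹ = ((u + s) * (s * u))⁻¹ := by
    have h1 : s⁻¹ - u⁻¹ = (u - s) * (s * u)⁻¹ := by
      field_simp
      rw [one_sub_div (ne_of_gt (by linarith : u > 0))]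
    rw [h1, hus, ← mul_inv]
  rw [hdiff]
  apply inv_le_c_inv (by nlinarith) (by nlinarith)
  have key : (u + s) * u ≤ 4 * s^2 := by nlinarith [sq_nonneg (u - s)]
  calc (u + s) * (s * u) = s * ((u + s) * u) := by ring
    _ ≤ s * (4 * s^2) := by
        exact mul_le_mul_of_nonneg_left key (by linarith)
    _ = 4 * ((k:ℝ) * s) := by rw [← hs]; ring

lemma tFin_sqrt (p : ℕ) (hp : 1 ≤ p) (w : ℂ) (hw1 : ‖w‖ = 1) (n : ℕ) :
    ‖tFin p w n‖ ≤ 2^(p+1) * Real.sqrt (n:ℝ) := by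
  have key : ∀ k : ℕ, 1 ≤ k → ‖w ^ k / ((k:ℂ) - 1/2)^p‖
      ≤ 2^(p+1) * (Real.sqrt ((k:ℝ)+1-1) - Real.sqrt ((k:ℝ)-1)) := by
    intro k hk
    have hk1 : (1:ℝ) ≤ (k:ℝ) := cast_ge_one hk
    have h0 : (0:ℝ) < (k:ℝ) - 1/2 := half_pos' hk
    have hnorm : ‖w ^ k / ((k:ℂ) - 1/2)^p‖ = (((k:ℝ) - 1/2)^p)⁻¹ := by
      rw [norm_div, norm_pow, hw1, one_pow, norm_half_pow hk, one_div]
    rw [hnorm]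
    have step1 : (((k:ℝ) - 1/2)^p)⁻¹ ≤ 2^p * ((k:ℝ))⁻¹ := by
      apply inv_le_c_inv (by positivity) (by linarith)
      have e1 : (k:ℝ)^p ≤ 2^p * ((k:ℝ)-1/2)^p := by
        calc (k:ℝ)^p = ((k:ℝ)/2)^p * 2^p := by
              rw [div_pow]; field_simp
          _ ≤ ((k:ℝ)-1/2)^p * 2^p := by
              apply mul_le_mul_of_nonneg_right _ (by positivity)
              exact pow_le_pow_left₀ (by positivity) (by linarith) p
          _ = 2^p * ((k:ℝ)-1/2)^p := by ring
      have e2 : (k:ℝ) ≤ (k:ℝ)^p := le_self_pow₀ hk1 (by omega)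
      linarith
    have step2 : ((k:ℝ))⁻¹ ≤ 2 * (Real.sqrt ((k:ℝ)+1-1) - Real.sqrt ((k:ℝ)-1)) :=
      sqrt_step hk
    calc (((k:ℝ) - 1/2)^p)⁻¹ ≤ 2^p * ((k:ℝ))⁻¹ := step1
      _ ≤ 2^p * (2 * (Real.sqrt ((k:ℝ)+1-1) - Real.sqrt ((k:ℝ)-1))) :=
          mul_le_mul_of_nonneg_left step2 (by positivity)
      _ = 2^(p+1) * (Real.sqrt ((k:ℝ)+1-1) - Real.sqrt ((k:ℝ)-1)) := by
          rw [pow_succ]; ring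
  rcases Nat.eq_zero_or_pos n with rfl | hn
  · simp [tFin]
  calc ‖tFin p w n‖ ≤ ∑ k ∈ Icc 1 n, ‖w ^ k / ((k:ℂ) - 1/2)^p‖ := norm_sum_le _ _
    _ ≤ ∑ k ∈ Icc 1 n, 2^(p+1) * (Real.sqrt ((k:ℝ)+1-1) - Real.sqrt ((k:ℝ)-1)) := by
        refine Finset.sum_le_sum fun k hk => key k ?_
        rw [Finset.mem_Icc] at hk; omega
    _ = 2^(p+1) * ∑ k ∈ Ioc 0 n, ((fun m : ℕ => Real.sqrt ((m:ℝ)-1)) (k+1)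
          - (fun m : ℕ => Real.sqrt ((m:ℝ)-1)) k) := by
        rw [← Icc_one_eq_Ioc, Finset.mul_sum]
        refine Finset.sum_congr rfl fun k _ => ?_
        push_cast; ring_nf
    _ = 2^(p+1) * ((fun m : ℕ => Real.sqrt ((m:ℝ)-1)) (n+1)
          - (fun m : ℕ => Real.sqrt ((m:ℝ)-1)) (0+1)) := by
        exact congrArg (fun t => (2:ℝ)^(p+1) * t)
          (telescopeR (fun m : ℕ => Real.sqrt ((m:ℝ)-1)) (Nat.zero_le n))
    _ = 2^(p+1) * Real.sqrt (n:ℝ) := by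
        simp only []
        push_cast
        norm_num

lemma Dtail (y : ℂ) (hy1 : ‖y‖ = 1) (q : ℕ) (hq : 1 ≤ q) (hy : y ≠ 1 ∨ 2 ≤ q) :
    ∃ C, 0 ≤ C ∧ ∀ N M : ℕ, N ≤ M →
      ‖(∑ n ∈ Icc 1 M, y^n/(n:ℂ)^q) - ∑ n ∈ Icc 1 N, y^n/(n:ℂ)^q‖ ≤ C * (((N:ℝ)+1))⁻¹ := by
  rcases hy with hy | hq2
  · set a : ℕ → ℝ := fun n => if n = 0 then 1 else (((n:ℝ))⁻¹)^q with ha_def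
    have haval : ∀ n : ℕ, 1 ≤ n → a n = (((n:ℝ))⁻¹)^q := fun n hn => by
      simp only [ha_def]; rw [if_neg (by omega)]
    have ha0 : ∀ n, 0 ≤ a n := fun n => by
      simp only [ha_def]; split
      · norm_num
      · positivity
    have ha1 : a 1 = 1 := by rw [haval 1 le_rfl]; norm_num
    have haA : Antitone a := by
      refine antitone_nat_of_succ_le fun n => ?_
      match n with
      | 0 => rw [ha1]; simp [ha_def]
      | (m+1) =>
        rw [haval (m+2) (by omega), haval (m+1) (by omega)]
        refine pow_le_pow_left₀ (by positivity) ?_ q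
        rw [inv_le_inv₀ (by exact_mod_cast Nat.succ_pos (m+1)) (by exact_mod_cast Nat.succ_pos m)]
        push_cast; linarith
    have hub : ∀ N : ℕ, a (N+1) ≤ (((N:ℝ)+1))⁻¹ := by
      intro N
      rw [haval (N+1) (by omega)]
      have h1 : ((((N+1:ℕ)):ℝ))⁻¹ ≤ 1 := by
        rw [inv_le_one_iff₀]; right; exact cast_ge_one (by omega)
      calc (((((N+1:ℕ)):ℝ))⁻¹)^q ≤ (((((N+1:ℕ)):ℝ))⁻¹)^1 :=
            pow_le_pow_of_le_one (by positivity) h1 hq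
        _ = (((N:ℝ)+1))⁻¹ := by rw [pow_one]; push_cast; ring
    set B : ℝ := 2 / ‖y - 1‖ with hB_def
    have hB0 : 0 ≤ B := by positivity
    refine ⟨2 * B, by positivity, fun N M h => ?_⟩
    rw [sum_Icc_diff _ h]
    have hcong : ∀ n ∈ Ioc N M, y^n/(n:ℂ)^q = ((a n : ℝ):ℂ) * y^n := by
      intro n hn
      rw [Finset.mem_Ioc] at hn
      rw [haval n (by omega)]
      push_cast
      rw [inv_pow, div_eq_mul_inv, mul_comm]
    rw [Finset.sum_congr rfl hcong]
    calc ‖∑ n ∈ Ioc N M, ((a n : ℝ):ℂ) * y^n‖ ≤ 2 * B * a (N+1) :=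
          abel_bound a (fun n => y^n) B haA ha0 (fun n => geom_bound hy1 hy n) h
      _ ≤ 2 * B * (((N:ℝ)+1))⁻¹ :=
          mul_le_mul_of_nonneg_left (hub N) (by positivity)
  · refine ⟨2, by norm_num, fun N M h => ?_⟩
    rw [sum_Icc_diff _ h]
    have hb := abs_bound (fun n => y^n/(n:ℂ)^q) (fun n => ((n:ℝ))⁻¹) 2 (by norm_num)
      (fun n => by positivity) ?_ h
    · calc ‖∑ n ∈ Ioc N M, y^n/(n:ℂ)^q‖ ≤ 2 * ((((N+1:ℕ)):ℝ))⁻¹ := hb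
        _ = 2 * (((N:ℝ)+1))⁻¹ := by push_cast; ring
    · intro n hn
      have hx1 : (1:ℝ) ≤ (n:ℝ) := cast_ge_one hn
      have hnorm : ‖y^n/(n:ℂ)^q‖ = (((n:ℝ))^q)⁻¹ := by
        rw [norm_div, norm_pow, hy1, one_pow, norm_nat_pow, one_div]
      rw [hnorm]
      have hd : ((n:ℝ)⁻¹ - ((((n+1:ℕ)):ℝ))⁻¹) = ((n:ℝ)*((n:ℝ)+1))⁻¹ := by
        push_cast; rw [mul_inv]; field_simp; ring
      rw [hd]
      apply inv_le_c_inv (by positivity) (by nlinarith)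
      have e2 : (n:ℝ)^2 ≤ (n:ℝ)^q := pow_le_pow_right₀ hx1 hq2
      nlinarith

noncomputable def tR (n : ℕ) : ℝ := ∑ k ∈ Finset.Icc 1 n, ((k:ℝ) - 1/2)⁻¹

lemma tFin_one_one (n : ℕ) : tFin 1 1 n = ((tR n : ℝ) : ℂ) := by
  rw [tFin, tR, Complex.ofReal_sum]
  refine Finset.sum_congr rfl fun k hk => ?_
  rw [Finset.mem_Icc] at hk
  push_cast
  rw [one_pow, pow_one, one_div]

lemma tR_nonneg (n : ℕ) : 0 ≤ tR n := by
  refine Finset.sum_nonneg fun k hk => ?_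
  rw [Finset.mem_Icc] at hk
  exact (inv_nonneg).2 (half_pos' hk.1).le

lemma tR_one : tR 1 = 2 := by
  rw [tR]; norm_num

lemma tR_succ (n : ℕ) : tR (n+1) = tR n + ((((n+1:ℕ)):ℝ) - 1/2)⁻¹ :=
  Finset.sum_Icc_succ_top (by omega) _

lemma tR_ge_two {n : ℕ} (hn : 1 ≤ n) : 2 ≤ tR n := by
  induction n with
  | zero => omega
  | succ m ih =>
    rcases Nat.eq_zero_or_pos m with rfl | hm
    · rw [show (0+1 : ℕ) = 1 from rfl, tR_one]
    · have hs := tR_succ m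
      have hd : 0 ≤ ((((m+1:ℕ)):ℝ) - 1/2)⁻¹ := (inv_nonneg).2 (half_pos' (by omega)).le
      linarith [ih hm]

lemma tR_le (n : ℕ) : tR n ≤ 4 * Real.sqrt (n:ℝ) := by
  have h := tFin_sqrt 1 le_rfl 1 (by simp) n
  rw [tFin_one_one, Complex.norm_real, Real.norm_of_nonneg (tR_nonneg n)] at h
  norm_num at h
  exact h

lemma B_lim (p q : ℕ) (hp : 1 ≤ p) (hq : 1 ≤ q) (x y : ℂ) (hx1 : ‖x‖ = 1) (hy1 : ‖y‖ = 1)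
    (hy : y ≠ 1 ∨ 2 ≤ q) :
    ∃ L, Tendsto (fun N => ∑ n ∈ Icc 1 N, tFin p x n * y ^ n / (n:ℂ)^q) atTop (𝓝 L) := by
  by_cases hA : x ≠ 1 ∨ 2 ≤ p
  · -- case A : tFin p x converges
    obtain ⟨Ct, hCt0, hCt⟩ := tFin_tail x hx1 p hp hA
    obtain ⟨T, hT, hTb⟩ := lim_of_tail _ Ct hCt
    obtain ⟨CD, hCD0, hCD⟩ := Dtail y hy1 q hq hy
    obtain ⟨LD, hLD, _⟩ := lim_of_tail _ CD hCD
    have hEtail : ∀ N M : ℕ, N ≤ M →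
        ‖(∑ n ∈ Icc 1 M, (tFin p x n - T) * (y^n/(n:ℂ)^q))
          - ∑ n ∈ Icc 1 N, (tFin p x n - T) * (y^n/(n:ℂ)^q)‖ ≤ Ct * (((N:ℝ)+1))⁻¹ := by
      intro N M h
      rw [sum_Icc_diff _ h]
      have hb := abs_bound (fun n => (tFin p x n - T) * (y^n/(n:ℂ)^q)) (fun n => ((n:ℝ))⁻¹)
        Ct hCt0 (fun n => by positivity) ?_ h
      · calc ‖∑ n ∈ Ioc N M, (tFin p x n - T) * (y^n/(n:ℂ)^q)‖
            ≤ Ct * ((((N+1:ℕ)):ℝ))⁻¹ := hb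
          _ = Ct * (((N:ℝ)+1))⁻¹ := by push_cast; ring
      · intro n hn
        have hxn : (1:ℝ) ≤ (n:ℝ) := cast_ge_one hn
        have hd : ((n:ℝ)⁻¹ - ((((n+1:ℕ)):ℝ))⁻¹) = (((n:ℝ))*((n:ℝ)+1))⁻¹ := by
          push_cast; rw [mul_inv]; field_simp; ring
        rw [hd, norm_mul, norm_div, norm_pow, hy1, one_pow, norm_nat_pow]
        have h1 : ‖tFin p x n - T‖ ≤ Ct * (((n:ℝ)+1))⁻¹ := hTb n
        have h2 : 1 / ((n:ℝ))^q ≤ ((n:ℝ))⁻¹ := by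
          rw [one_div]
          rw [inv_le_inv₀ (by positivity) (by positivity)]
          exact le_self_pow₀ hxn (by omega)
        calc ‖tFin p x n - T‖ * (1 / ((n:ℝ))^q)
            ≤ (Ct * (((n:ℝ)+1))⁻¹) * ((n:ℝ))⁻¹ := by
              apply mul_le_mul h1 h2 (by positivity) (by positivity)
          _ = Ct * (((n:ℝ))*((n:ℝ)+1))⁻¹ := by rw [mul_inv]; ring
    obtain ⟨LE, hLE, _⟩ := lim_of_tail _ Ct hEtail
    refine ⟨T * LD + LE, ?_⟩
    have split : ∀ N, (∑ n ∈ Icc 1 N, tFin p x n * y ^ n / (n:ℂ)^q)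
        = T * (∑ n ∈ Icc 1 N, y^n/(n:ℂ)^q)
          + ∑ n ∈ Icc 1 N, (tFin p x n - T) * (y^n/(n:ℂ)^q) := by
      intro N
      rw [Finset.mul_sum, ← Finset.sum_add_distrib]
      exact Finset.sum_congr rfl fun n _ => by ring
    exact ((hLD.const_mul T).add hLE).congr (fun N => (split N).symm)
  · -- case B : p = 1, x = 1
    push_neg at hA
    obtain ⟨hx1', hp2⟩ := hA
    have hxeq : x = 1 := not_not.1 (by simpa using hx1')
    have hpeq : p = 1 := by omega
    subst hxeq; subst hpeq
    rcases hy with hy | hq2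
    · -- Dirichlet with weight tR n / n^q
      set a : ℕ → ℝ := fun n => if n = 0 then 2 else tR n * (((n:ℝ))^q)⁻¹ with ha_def
      have haval : ∀ n : ℕ, 1 ≤ n → a n = tR n * (((n:ℝ))^q)⁻¹ := fun n hn => by
        simp only [ha_def]; rw [if_neg (by omega)]
      have ha0 : ∀ n, 0 ≤ a n := fun n => by
        simp only [ha_def]; split
        · norm_num
        · have := tR_nonneg n; positivity
      have ha1 : a 1 = 2 := by rw [haval 1 le_rfl, tR_one]; norm_num
      have haA : Antitone a := by
        refine antitone_nat_of_succ_le fun n => ?_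
        match n with
        | 0 => rw [ha1]; simp [ha_def]
        | (m+1) =>
          rw [haval (m+2) (by omega), haval (m+1) (by omega)]
          obtain ⟨s, rfl⟩ : ∃ s, q = s + 1 := ⟨q-1, by omega⟩
          have hm1 : (0:ℝ) < ((m+1:ℕ):ℝ) := by exact_mod_cast Nat.succ_pos m
          have hm2 : (0:ℝ) < ((m+2:ℕ):ℝ) := by exact_mod_cast Nat.succ_pos (m+1)
          rw [← div_eq_mul_inv, ← div_eq_mul_inv,
            div_le_div_iff₀ (by positivity) (by positivity)]
          have ht2 : (2:ℝ) ≤ tR (m+1) := tR_ge_two (by omega)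
          have hd1 : ((((m+2:ℕ)):ℝ) - 1/2)⁻¹ * ((m+1:ℕ):ℝ) ≤ 1 := by
            rw [inv_mul_le_iff₀ (half_pos' (show 1 ≤ m+2 by omega))]
            push_cast; linarith
          have hkey : tR (m+2) * ((m+1:ℕ):ℝ) ≤ tR (m+1) * ((m+2:ℕ):ℝ) := by
            rw [tR_succ (m+1)]
            have : ((m+2:ℕ):ℝ) = ((m+1:ℕ):ℝ) + 1 := by push_cast; ring
            rw [this] at hd1 ⊢
            nlinarith [hd1, ht2, hm1]
          calc tR (m+2) * ((m+1:ℕ):ℝ)^(s+1)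
              = (tR (m+2) * ((m+1:ℕ):ℝ)) * ((m+1:ℕ):ℝ)^s := by ring
            _ ≤ (tR (m+1) * ((m+2:ℕ):ℝ)) * ((m+2:ℕ):ℝ)^s := by
                apply mul_le_mul hkey (pow_le_pow_left₀ (by positivity) (by push_cast; linarith) s)
                  (by positivity) ?_
                have := tR_nonneg (m+1); positivity
            _ = tR (m+1) * ((m+2:ℕ):ℝ)^(s+1) := by ring
      have hsqinv : ∀ n : ℕ, 1 ≤ n → Real.sqrt (n:ℝ) * ((n:ℝ))⁻¹ = (Real.sqrt (n:ℝ))⁻¹ := by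
        intro n hn
        have hss : Real.sqrt (n:ℝ) * Real.sqrt (n:ℝ) = (n:ℝ) :=
          Real.mul_self_sqrt (by positivity)
        have hs0 : (0:ℝ) < Real.sqrt (n:ℝ) :=
          Real.sqrt_pos.2 (by have := cast_ge_one hn; linarith)
        field_simp
        rw [sq, hss]
      have haT : Tendsto a atTop (𝓝 0) := by
        apply squeeze_zero' (Eventually.of_forall ha0)
          (g := fun n : ℕ => 4 * (Real.sqrt (n:ℝ))⁻¹)
        · refine eventually_atTop.2 ⟨1, fun n hn => ?_⟩
          rw [haval n hn]
          have hxn := cast_ge_one hn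
          have h1 : (((n:ℝ))^q)⁻¹ ≤ ((n:ℝ))⁻¹ := by
            rw [inv_le_inv₀ (by positivity) (by positivity)]
            exact le_self_pow₀ hxn (by omega)
          calc tR n * (((n:ℝ))^q)⁻¹ ≤ (4 * Real.sqrt (n:ℝ)) * ((n:ℝ))⁻¹ :=
                mul_le_mul (tR_le n) h1 (by positivity) (by positivity)
            _ = 4 * (Real.sqrt (n:ℝ) * ((n:ℝ))⁻¹) := by ring
            _ = 4 * (Real.sqrt (n:ℝ))⁻¹ := by rw [hsqinv n hn]
        · simpa using tendsto_inv_sqrt.const_mul (4:ℝ)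
      set B : ℝ := 2 / ‖y - 1‖ with hB_def
      have hρT : Tendsto (fun N : ℕ => 2 * B * a (N+1)) atTop (𝓝 0) := by
        have h1 : Tendsto (fun N : ℕ => a (N+1)) atTop (𝓝 0) :=
          haT.comp (tendsto_add_atTop_nat 1)
        simpa using h1.const_mul (2*B)
      have htail : ∀ N M : ℕ, N ≤ M →
          ‖(∑ n ∈ Icc 1 M, tFin 1 (1:ℂ) n * y ^ n / (n:ℂ)^q)
            - ∑ n ∈ Icc 1 N, tFin 1 (1:ℂ) n * y ^ n / (n:ℂ)^q‖ ≤ 2 * B * a (N+1) := by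
        intro N M h
        rw [sum_Icc_diff _ h]
        have hcong : ∀ n ∈ Ioc N M, tFin 1 (1:ℂ) n * y ^ n / (n:ℂ)^q
            = ((a n : ℝ):ℂ) * y^n := by
          intro n hn
          rw [Finset.mem_Ioc] at hn
          rw [haval n (by omega), tFin_one_one]
          push_cast
          rw [div_eq_mul_inv]; ring
        rw [Finset.sum_congr rfl hcong]
        exact abel_bound a (fun n => y^n) B haA ha0
          (fun n => geom_bound hy1 hy n) h
      obtain ⟨L, hL, _⟩ := exists_lim_of_rate _ _ hρT htail
      exact ⟨L, hL⟩
    · -- absolute case q ≥ 2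
      have hsqinv : ∀ n : ℕ, 1 ≤ n → Real.sqrt (n:ℝ) * ((n:ℝ))⁻¹ = (Real.sqrt (n:ℝ))⁻¹ := by
        intro n hn
        have hss : Real.sqrt (n:ℝ) * Real.sqrt (n:ℝ) = (n:ℝ) :=
          Real.mul_self_sqrt (by positivity)
        have hs0 : (0:ℝ) < Real.sqrt (n:ℝ) :=
          Real.sqrt_pos.2 (by have := cast_ge_one hn; linarith)
        field_simp
        rw [sq, hss]
      have hρT : Tendsto (fun N : ℕ => 16 * (Real.sqrt (((N+1:ℕ)):ℝ))⁻¹) atTop (𝓝 0) := by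
        have h1 : Tendsto (fun N : ℕ => (Real.sqrt (((N+1:ℕ)):ℝ))⁻¹) atTop (𝓝 0) :=
          tendsto_inv_sqrt.comp (tendsto_add_atTop_nat 1)
        simpa using h1.const_mul (16:ℝ)
      have htail : ∀ N M : ℕ, N ≤ M →
          ‖(∑ n ∈ Icc 1 M, tFin 1 (1:ℂ) n * y ^ n / (n:ℂ)^q)
            - ∑ n ∈ Icc 1 N, tFin 1 (1:ℂ) n * y ^ n / (n:ℂ)^q‖
            ≤ 16 * (Real.sqrt (((N+1:ℕ)):ℝ))⁻¹ := by
        intro N M h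
        rw [sum_Icc_diff _ h]
        refine abs_bound _ (fun n : ℕ => (Real.sqrt ((n:ℕ):ℝ))⁻¹) 16 (by norm_num)
          (fun n => by positivity) ?_ h
        intro n hn
        have hxn := cast_ge_one hn
        have hnorm : ‖tFin 1 (1:ℂ) n * y ^ n / (n:ℂ)^q‖ = tR n * (((n:ℝ))^q)⁻¹ := by
          rw [norm_div, norm_mul, norm_pow, hy1, one_pow, mul_one, norm_nat_pow,
            tFin_one_one, Complex.norm_real, Real.norm_of_nonneg (tR_nonneg n),
            div_eq_mul_inv]
        rw [hnorm]
        have h2 : (((n:ℝ))^q)⁻¹ ≤ (((n:ℝ))^2)⁻¹ := by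
          rw [inv_le_inv₀ (by positivity) (by positivity)]
          exact pow_le_pow_right₀ hxn hq2
        have hkey : Real.sqrt (n:ℝ) * (((n:ℝ))^2)⁻¹ = ((n:ℝ) * Real.sqrt (n:ℝ))⁻¹ := by
          rw [sq, mul_inv, ← mul_assoc, hsqinv n hn, ← mul_inv, mul_comm (Real.sqrt (n:ℝ))]
        calc tR n * (((n:ℝ))^q)⁻¹ ≤ (4 * Real.sqrt (n:ℝ)) * (((n:ℝ))^2)⁻¹ :=
              mul_le_mul (tR_le n) h2 (by positivity) (by positivity)
          _ = 4 * ((n:ℝ) * Real.sqrt (n:ℝ))⁻¹ := by rw [mul_assoc, hkey]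
          _ ≤ 4 * (4 * ((Real.sqrt ((n:ℕ):ℝ))⁻¹ - (Real.sqrt (((n+1:ℕ)):ℝ))⁻¹)) := by
              have := inv_sqrt_step hn
              linarith
          _ = 16 * ((Real.sqrt ((n:ℕ):ℝ))⁻¹ - (Real.sqrt (((n+1:ℕ)):ℝ))⁻¹) := by ring
      obtain ⟨L, hL, _⟩ := exists_lim_of_rate _ _ hρT htail
      exact ⟨L, hL⟩

lemma S2_lim (p q r : ℕ) (hp : 1 ≤ p) (hq : 1 ≤ q) (hr : 1 ≤ r) (x y z : ℂ)
    (hx1 : ‖x‖ = 1) (hy1 : ‖y‖ = 1) (hz1 : ‖z‖ = 1)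
    {LB : ℂ} (hLB : Tendsto (fun N => ∑ n ∈ Icc 1 N, tFin p x n * y ^ n / (n:ℂ)^q)
      atTop (𝓝 LB))
    {LU : ℂ} {CU : ℝ} (hCU0 : 0 ≤ CU)
    (hU : ∀ n : ℕ, ‖tFin r z n - LU‖ ≤ CU * (((n:ℝ)+1))⁻¹) :
    ∃ L, Tendsto (fun N => ∑ n ∈ Icc 1 N, tFin p x n * tFin r z n * y ^ n / (n:ℂ)^q)
      atTop (𝓝 L) := by
  set K : ℝ := CU * 2^(p+1) * 4 with hK_def
  have hρT : Tendsto (fun N : ℕ => K * (Real.sqrt (((N+1:ℕ)):ℝ))⁻¹) atTop (𝓝 0) := by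
    have h1 : Tendsto (fun N : ℕ => (Real.sqrt (((N+1:ℕ)):ℝ))⁻¹) atTop (𝓝 0) :=
      tendsto_inv_sqrt.comp (tendsto_add_atTop_nat 1)
    simpa using h1.const_mul K
  have htail : ∀ N M : ℕ, N ≤ M →
      ‖(∑ n ∈ Icc 1 M, (tFin r z n - LU) * (tFin p x n * y ^ n / (n:ℂ)^q))
        - ∑ n ∈ Icc 1 N, (tFin r z n - LU) * (tFin p x n * y ^ n / (n:ℂ)^q)‖
        ≤ K * (Real.sqrt (((N+1:ℕ)):ℝ))⁻¹ := by
    intro N M h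
    rw [sum_Icc_diff _ h]
    refine abs_bound _ (fun n : ℕ => (Real.sqrt ((n:ℕ):ℝ))⁻¹) K
      (by positivity) (fun n => by positivity) ?_ h
    intro n hn
    have hxn := cast_ge_one hn
    have hn0 : (0:ℝ) < (n:ℝ) := by linarith
    have hss : Real.sqrt (n:ℝ) * Real.sqrt (n:ℝ) = (n:ℝ) := Real.mul_self_sqrt (by positivity)
    have hs0 : (0:ℝ) < Real.sqrt (n:ℝ) := Real.sqrt_pos.2 hn0
    have hkey : Real.sqrt (n:ℝ) * (((n:ℝ))^2)⁻¹ = ((n:ℝ) * Real.sqrt (n:ℝ))⁻¹ := by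
      field_simp
      linear_combination hss
    have hnorm : ‖(tFin r z n - LU) * (tFin p x n * y ^ n / (n:ℂ)^q)‖
        = ‖tFin r z n - LU‖ * (‖tFin p x n‖ * 1 / ((n:ℝ))^q) := by
      rw [norm_mul, norm_div, norm_mul, norm_pow, hy1, one_pow, norm_nat_pow]
    rw [hnorm]
    have h1 : ‖tFin r z n - LU‖ ≤ CU * ((n:ℝ))⁻¹ := by
      refine (hU n).trans ?_
      have hi : (((n:ℝ)+1))⁻¹ ≤ ((n:ℝ))⁻¹ := by
        rw [inv_le_inv₀ (by linarith) hn0]; linarith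
      exact mul_le_mul_of_nonneg_left hi hCU0
    have h2 : ‖tFin p x n‖ * 1 / ((n:ℝ))^q
        ≤ 2^(p+1) * (Real.sqrt (n:ℝ) * (((n:ℝ))^q)⁻¹) := by
      rw [mul_one, div_eq_mul_inv, ← mul_assoc]
      exact mul_le_mul_of_nonneg_right (tFin_sqrt p hp x hx1 n) (by positivity)
    have hqi : (((n:ℝ))^q)⁻¹ ≤ ((n:ℝ))⁻¹ := by
      rw [inv_le_inv₀ (by positivity) hn0]
      exact le_self_pow₀ hxn (by omega)
    calc ‖tFin r z n - LU‖ * (‖tFin p x n‖ * 1 / ((n:ℝ))^q)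
        ≤ (CU * ((n:ℝ))⁻¹) * (2^(p+1) * (Real.sqrt (n:ℝ) * (((n:ℝ))^q)⁻¹)) :=
          mul_le_mul h1 h2 (by positivity) (by positivity)
      _ = (CU * 2^(p+1) * Real.sqrt (n:ℝ) * ((n:ℝ))⁻¹) * (((n:ℝ))^q)⁻¹ := by ring
      _ ≤ (CU * 2^(p+1) * Real.sqrt (n:ℝ) * ((n:ℝ))⁻¹) * ((n:ℝ))⁻¹ := by
          exact mul_le_mul_of_nonneg_left hqi (by positivity)
      _ = CU * 2^(p+1) * (Real.sqrt (n:ℝ) * (((n:ℝ))^2)⁻¹) := by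
          rw [sq, mul_inv]; ring
      _ = CU * 2^(p+1) * (((n:ℝ) * Real.sqrt (n:ℝ))⁻¹) := by rw [hkey]
      _ ≤ CU * 2^(p+1) * (4 * ((Real.sqrt ((n:ℕ):ℝ))⁻¹ - (Real.sqrt (((n+1:ℕ)):ℝ))⁻¹)) :=
          mul_le_mul_of_nonneg_left (inv_sqrt_step hn) (by positivity)
      _ = K * ((Real.sqrt ((n:ℕ):ℝ))⁻¹ - (Real.sqrt (((n+1:ℕ)):ℝ))⁻¹) := by
          rw [hK_def]; ring
  obtain ⟨LF, hLF, _⟩ := exists_lim_of_rate _ _ hρT htail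
  refine ⟨LU * LB + LF, ?_⟩
  have split : ∀ N, (∑ n ∈ Icc 1 N, tFin p x n * tFin r z n * y ^ n / (n:ℂ)^q)
      = LU * (∑ n ∈ Icc 1 N, tFin p x n * y ^ n / (n:ℂ)^q)
        + ∑ n ∈ Icc 1 N, (tFin r z n - LU) * (tFin p x n * y ^ n / (n:ℂ)^q) := by
    intro N; rw [Finset.mul_sum, ← Finset.sum_add_distrib]
    exact Finset.sum_congr rfl fun n _ => by ring
  exact ((hLB.const_mul LU).add hLF).congr (fun N => (split N).symm)

/-- Summation by parts for the partial sums. -/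
lemma abel2 (p q r : ℕ) (x y z : ℂ) (M : ℕ) :
    ∑ n ∈ Icc 1 M, (z^n/((n:ℂ)-1/2)^r)
        * (∑ m ∈ Icc 1 (n-1), tFin p x m * y^m / (m:ℂ)^q)
      = tFin r z M * (∑ m ∈ Icc 1 M, tFin p x m * y^m / (m:ℂ)^q)
        - ∑ n ∈ Icc 1 M, tFin p x n * tFin r z n * y^n / (n:ℂ)^q := by
  induction M with
  | zero => simp [tFin]
  | succ M ih =>
    have e1 : ∑ n ∈ Icc 1 (M+1), (z^n/((n:ℂ)-1/2)^r)
          * (∑ m ∈ Icc 1 (n-1), tFin p x m * y^m / (m:ℂ)^q)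
        = (∑ n ∈ Icc 1 M, (z^n/((n:ℂ)-1/2)^r)
            * (∑ m ∈ Icc 1 (n-1), tFin p x m * y^m / (m:ℂ)^q))
          + (z^(M+1)/((((M+1:ℕ)):ℂ)-1/2)^r)
            * (∑ m ∈ Icc 1 M, tFin p x m * y^m / (m:ℂ)^q) := by
      rw [Finset.sum_Icc_succ_top (by omega)]
      simp only [Nat.add_sub_cancel]
    have e2 : ∑ m ∈ Icc 1 (M+1), tFin p x m * y^m / (m:ℂ)^q
        = (∑ m ∈ Icc 1 M, tFin p x m * y^m / (m:ℂ)^q)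
          + tFin p x (M+1) * y^(M+1) / ((((M+1:ℕ)):ℂ))^q :=
      Finset.sum_Icc_succ_top (by omega) _
    have e3 : ∑ n ∈ Icc 1 (M+1), tFin p x n * tFin r z n * y^n / (n:ℂ)^q
        = (∑ n ∈ Icc 1 M, tFin p x n * tFin r z n * y^n / (n:ℂ)^q)
          + tFin p x (M+1) * tFin r z (M+1) * y^(M+1) / ((((M+1:ℕ)):ℂ))^q :=
      Finset.sum_Icc_succ_top (by omega) _
    have eU : tFin r z (M+1) = tFin r z M + z^(M+1)/((((M+1:ℕ)):ℂ)-1/2)^r := by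
      rw [tFin, tFin]
      exact Finset.sum_Icc_succ_top (by omega) _
    rw [e1, e2, e3, eU, ih]
    ring

/-- The inner double sum of the triple sum. -/
lemma F_eq (p q r : ℕ) (x y z : ℂ) (n : ℕ) :
    (∑ n2 ∈ Icc 1 ((n+1)-1), ∑ n1 ∈ Icc 1 (n2-1),
        x^n1 * y^n2 * z^((n+1:ℕ)) /
          ((2*(n1:ℂ)-1)^p * (2*(n2:ℂ)-2)^q * (2*(((n+1:ℕ)):ℂ)-3)^r))
      = y * z * (((2:ℂ)^p)⁻¹ * ((2:ℂ)^q)⁻¹ * ((2:ℂ)^r)⁻¹)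
          * ((z^n/((n:ℂ)-1/2)^r)
            * (∑ m ∈ Icc 1 (n-1), tFin p x m * y^m / (m:ℂ)^q)) := by
  rcases Nat.eq_zero_or_pos n with rfl | hn
  · simp
  simp only [Nat.add_sub_cancel]
  -- drop the n2 = 1 term and reindex n2 = m+1
  have hsplit : Finset.Icc 1 n = insert 1 (Finset.Icc 2 n) := by
    ext k; simp [Finset.mem_Icc, Finset.mem_insert]; omega
  have h1notin : (1:ℕ) ∉ Finset.Icc 2 n := by simp
  rw [hsplit, Finset.sum_insert h1notin]
  have hz1 : (∑ n1 ∈ Icc 1 ((1:ℕ)-1),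
      x^n1 * y^(1:ℕ) * z^((n+1:ℕ)) /
        ((2*(n1:ℂ)-1)^p * (2*((1:ℕ):ℂ)-2)^q * (2*(((n+1:ℕ)):ℂ)-3)^r)) = 0 := by
    simp
  rw [hz1, zero_add]
  have hmap : Finset.Icc 2 n = (Finset.Icc 1 (n-1)).map (addRightEmbedding 1) := by
    rw [Finset.map_add_right_Icc]
    congr 1
    omega
  rw [hmap, Finset.sum_map]
  have hRHS : y * z * (((2:ℂ)^p)⁻¹ * ((2:ℂ)^q)⁻¹ * ((2:ℂ)^r)⁻¹)
        * ((z^n/((n:ℂ)-1/2)^r) * (∑ m ∈ Icc 1 (n-1), tFin p x m * y^m / (m:ℂ)^q))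
      = ∑ m ∈ Icc 1 (n-1), y * z * (((2:ℂ)^p)⁻¹ * ((2:ℂ)^q)⁻¹ * ((2:ℂ)^r)⁻¹)
          * ((z^n/((n:ℂ)-1/2)^r) * (tFin p x m * y^m / (m:ℂ)^q)) := by
    rw [Finset.mul_sum, Finset.mul_sum]
  rw [hRHS]
  refine Finset.sum_congr rfl fun m hm => ?_
  simp only [addRightEmbedding_apply]
  have hm1 : (m+1)-1 = m := by omega
  rw [hm1, tFin]
  rw [Finset.sum_mul, Finset.sum_div, Finset.mul_sum, Finset.mul_sum]
  refine Finset.sum_congr rfl fun k hk => ?_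
  push_cast
  rw [show (2*((k:ℂ))-1) = 2*((k:ℂ)-1/2) by ring,
    show (2*((m:ℂ)+1)-2) = 2*((m:ℂ)) by ring,
    show (2*((n:ℂ)+1)-3) = 2*((n:ℂ)-1/2) by ring,
    mul_pow, mul_pow, mul_pow]
  ring

lemma triple_eq (p q r : ℕ) (x y z : ℂ) (N : ℕ) :
    (∑ n3 ∈ Icc 1 N, ∑ n2 ∈ Icc 1 (n3-1), ∑ n1 ∈ Icc 1 (n2-1),
        x^n1 * y^n2 * z^n3 / ((2*(n1:ℂ)-1)^p * (2*(n2:ℂ)-2)^q * (2*(n3:ℂ)-3)^r))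
      = y * z * (((2:ℂ)^p)⁻¹ * ((2:ℂ)^q)⁻¹ * ((2:ℂ)^r)⁻¹)
          * ∑ n ∈ Icc 1 (N-1), (z^n/((n:ℂ)-1/2)^r)
              * (∑ m ∈ Icc 1 (n-1), tFin p x m * y^m / (m:ℂ)^q) := by
  induction N with
  | zero => simp
  | succ N ih =>
    rw [Finset.sum_Icc_succ_top (by omega : 1 ≤ N+1), ih, F_eq p q r x y z N,
      Nat.add_sub_cancel]
    rcases Nat.eq_zero_or_pos N with rfl | hN
    · simp
    · obtain ⟨K, rfl⟩ : ∃ K, N = K+1 := ⟨N-1, by omega⟩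
      rw [Finset.sum_Icc_succ_top (by omega : 1 ≤ K+1), Nat.add_sub_cancel]
      ring

lemma main (x y z : ℂ) (hx : ∃ m : ℕ, 0 < m ∧ x ^ m = 1)
    (hy : ∃ m : ℕ, 0 < m ∧ y ^ m = 1) (hz : ∃ m : ℕ, 0 < m ∧ z ^ m = 1)
    (p q r : ℕ) (hp : 1 ≤ p) (hq : 1 ≤ q) (hr : 1 ≤ r)
    (hqy : ¬(q = 1 ∧ y = 1)) (hrz : ¬(r = 1 ∧ z = 1)) :
    Ti3 p q r x y z
      = y * z * (2 : ℂ) ^ (3 - (p : ℤ) - (q : ℤ) - (r : ℤ))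
          * (tpoly r z * Stilde p q x y - Stilde2 p r q x z y) := by
  have hx1 : ‖x‖ = 1 := norm_eq_one hx
  have hy1 : ‖y‖ = 1 := norm_eq_one hy
  have hz1 : ‖z‖ = 1 := norm_eq_one hz
  have hy' : y ≠ 1 ∨ 2 ≤ q := by
    rcases eq_or_ne y 1 with rfl | h
    · right; rcases Nat.lt_or_ge q 2 with h2 | h2
      · exact absurd ⟨by omega, rfl⟩ hqy
      · exact h2
    · exact Or.inl h
  have hz' : z ≠ 1 ∨ 2 ≤ r := by
    rcases eq_or_ne z 1 with rfl | h
    · right; rcases Nat.lt_or_ge r 2 with h2 | h2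
      · exact absurd ⟨by omega, rfl⟩ hrz
      · exact h2
    · exact Or.inl h
  obtain ⟨CU, hCU0, hCUt⟩ := tFin_tail z hz1 r hr hz'
  obtain ⟨LU, hLU, hLUb⟩ := lim_of_tail _ CU hCUt
  obtain ⟨LB, hLB⟩ := B_lim p q hp hq x y hx1 hy1 hy'
  obtain ⟨LS, hLS⟩ := S2_lim p q r hp hq hr x y z hx1 hy1 hz1 hLB hCU0 hLUb
  set e : ℂ := ((2:ℂ)^p)⁻¹ * ((2:ℂ)^q)⁻¹ * ((2:ℂ)^r)⁻¹ with he_def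
  have hshift : Tendsto (fun N : ℕ => N - 1) atTop atTop := tendsto_sub_atTop_nat 1
  have h1 : Tendsto (fun N : ℕ =>
      tFin r z (N-1) * (∑ m ∈ Icc 1 (N-1), tFin p x m * y^m / (m:ℂ)^q)
        - ∑ n ∈ Icc 1 (N-1), tFin p x n * tFin r z n * y^n / (n:ℂ)^q)
      atTop (𝓝 (LU * LB - LS)) :=
    ((hLU.comp hshift).mul (hLB.comp hshift)).sub (hLS.comp hshift)
  have hAtend : Tendsto (fun N : ℕ => ∑ n3 ∈ Icc 1 N, ∑ n2 ∈ Icc 1 (n3-1), ∑ n1 ∈ Icc 1 (n2-1),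
      x^n1 * y^n2 * z^n3 / ((2*(n1:ℂ)-1)^p * (2*(n2:ℂ)-2)^q * (2*(n3:ℂ)-3)^r))
      atTop (𝓝 (y * z * e * (LU * LB - LS))) := by
    refine (h1.const_mul (y*z*e)).congr fun N => ?_
    have hA := triple_eq p q r x y z N
    rw [abel2 p q r x y z (N-1)] at hA
    rw [← he_def] at hA
    exact hA.symm
  have hval : Ti3 p q r x y z = 8 * (y * z * e * (LU * LB - LS)) := by
    unfold Ti3
    congr 1
    exact hAtend.limUnder_eq
  have hv1 : tpoly r z = LU := by
    have h : Tendsto (fun N : ℕ => ∑ n ∈ Finset.Icc 1 N, z ^ n / ((n : ℂ) - 1/2) ^ r)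
        atTop (𝓝 LU) := hLU
    exact h.limUnder_eq
  have hv2 : Stilde p q x y = LB := hLB.limUnder_eq
  have hv3 : Stilde2 p r q x z y = LS := hLS.limUnder_eq
  rw [hval, hv1, hv2, hv3]
  have hpow : (2:ℂ)^((3:ℤ) - (p:ℤ) - (q:ℤ) - (r:ℤ)) = 8 * e := by
    rw [he_def, zpow_sub₀ (two_ne_zero), zpow_sub₀ (two_ne_zero), zpow_sub₀ (two_ne_zero),
      zpow_natCast, zpow_natCast, zpow_natCast]
    norm_num
    ring
  rw [hpow]
  ring

end Stmt17Aux

theorem stmt17 (x y z : ℂ) (hx : ∃ m : ℕ, 0 < m ∧ x ^ m = 1)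
    (hy : ∃ m : ℕ, 0 < m ∧ y ^ m = 1) (hz : ∃ m : ℕ, 0 < m ∧ z ^ m = 1)
    (p q r : ℕ) (hp : 1 ≤ p) (hq : 1 ≤ q) (hr : 1 ≤ r)
    (hqy : ¬(q = 1 ∧ y = 1)) (hrz : ¬(r = 1 ∧ z = 1)) :
    Ti3 p q r x y z
      = y * z * (2 : ℂ) ^ (3 - (p : ℤ) - (q : ℤ) - (r : ℤ))
          * (tpoly r z * Stilde p q x y - Stilde2 p r q x z y) :=
  Stmt17Aux.main x y z hx hy hz p q r hp hq hr hqy hrz
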